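/- arXiv:2411.03400 — 4 statements merged into one kernel-verified Lean document; each statement's English description precedes it below -/
import Mathlib

section
/- Let Σ be a bipartite graph with bipartition U ∪ W such that every u ∈ U has at least x neighbours and every w ∈ W has at most y neighbours. Then there exists W' ⊆ W covering U (i.e. every u ∈ U has a neighbour in W') with |W'| ≤ (|W|/x)·(1 + ln y). -/
open Finset

lemma log_lb {s : ℝ} (hs : 0 < s) : 1 - 1/s ≤ Real.log s := by
  have h := Real.log_le_sub_one_of_pos (x := 1/s) (by positivity)
  rw [one_div, Real.log_inv] at h
  rw [one_div]
  linarith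

noncomputable def hfun (a : ℝ) (t : ℕ) : ℝ :=
  if (t : ℝ) ≤ a then (t : ℝ) else a * (1 + Real.log (t / a))

lemma hfun_step (a : ℝ) (ha : 1 ≤ a) (n t' : ℕ)
    (h1 : (t' : ℝ) ≤ n - n / a) (h2 : (t' : ℝ) + 1 ≤ n) :
    hfun a t' + 1 ≤ hfun a n := by
  have ha0 : (0:ℝ) < a := by linarith
  have hn0 : (0:ℝ) < n := by
    have : (0:ℝ) ≤ t' := Nat.cast_nonneg _
    linarith
  -- F1 : a * t' ≤ a * n - n
  have hF1 : a * t' ≤ a * n - n := by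
    have := mul_le_mul_of_nonneg_left h1 ha0.le
    have hna : a * ((n:ℝ) / a) = n := by field_simp
    nlinarith [this]
  unfold hfun
  by_cases hn : (n:ℝ) ≤ a
  · rw [if_pos (by linarith : (t':ℝ) ≤ a), if_pos hn]
    exact h2
  · push_neg at hn
    rw [if_neg (not_le.mpr hn)]
    have hL : 1 - a / n ≤ Real.log ((n:ℝ) / a) := by
      have := log_lb (s := (n:ℝ)/a) (by positivity)
      rwa [one_div_div] at this
    have hF2 : (n:ℝ) - a ≤ n * Real.log ((n:ℝ)/a) := by
      have := mul_le_mul_of_nonneg_left hL hn0.le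
      have heq : (n:ℝ) * (1 - a/n) = n - a := by field_simp
      nlinarith [mul_le_mul_of_nonneg_left hL hn0.le]
    set L := Real.log ((n:ℝ)/a) with hLdef
    by_cases ht : (t':ℝ) ≤ a
    · rw [if_pos ht]
      by_cases hc : (n:ℝ) - (n:ℝ)/a ≤ a
      · -- t' ≤ n - n/a, and n - n/a ≤ a : polynomial case
        have hc' : a * n - n ≤ a * a := by
          have := mul_le_mul_of_nonneg_left hc ha0.le
          have hna : a * ((n:ℝ) / a) = n := by field_simp
          nlinarith [this]
        have hP : 0 ≤ ((n:ℝ) - a) * (a*a - (a*n - n)) := by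
          apply mul_nonneg <;> nlinarith
        nlinarith [mul_le_mul_of_nonneg_left hF1 hn0.le,
          mul_le_mul_of_nonneg_left hF2 (by positivity : (0:ℝ) ≤ a*a),
          hP, mul_pos ha0 hn0]
      · -- a < n - n/a : then a*L ≥ 1
        push_neg at hc
        have hc' : a * a ≤ a * n - n := by
          have := mul_le_mul_of_nonneg_left hc.le ha0.le
          have hna : a * ((n:ℝ) / a) = n := by field_simp
          nlinarith [this]
        have : 1 ≤ a * L := by
          nlinarith [mul_le_mul_of_nonneg_left hF2 ha0.le]
        linarith
    · push_neg at ht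
      rw [if_neg (not_le.mpr ht)]
      have ht0 : (0:ℝ) < t' := by linarith
      have hlogsplit : L - Real.log ((t':ℝ)/a) = Real.log ((n:ℝ)/(t':ℝ)) := by
        rw [hLdef, Real.log_div (by positivity) (by positivity),
            Real.log_div (by positivity) (by positivity),
            Real.log_div (by positivity) (by positivity)]
        ring
      have hL' : 1 - (t':ℝ)/n ≤ Real.log ((n:ℝ)/(t':ℝ)) := by
        have := log_lb (s := (n:ℝ)/(t':ℝ)) (by positivity)
        rwa [one_div_div] at this
      have hF2' : (n:ℝ) - t' ≤ n * Real.log ((n:ℝ)/(t':ℝ)) := by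
        have := mul_le_mul_of_nonneg_left hL' hn0.le
        have heq : (n:ℝ) * (1 - (t':ℝ)/n) = n - t' := by field_simp
        nlinarith [mul_le_mul_of_nonneg_left hL' hn0.le]
      have hkey : 1 ≤ a * Real.log ((n:ℝ)/(t':ℝ)) := by
        nlinarith [mul_le_mul_of_nonneg_left hF2' ha0.le]
      nlinarith [hlogsplit, hkey]

open Finset

/-- Lovász–Stein covering lemma: in a bipartite graph with parts `U`, `W`, if every
`u ∈ U` has at least `x` neighbours and every `w ∈ W` has at most `y` neighbours,
then some `W' ⊆ W` covers `U` with `|W'| ≤ (|W|/x)(1 + ln y)`. -/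
theorem stmt3 {U W : Type*} [Fintype U] [Fintype W] (E : U → W → Prop)
    [∀ u w, Decidable (E u w)] (x y : ℕ) (hx : 1 ≤ x) (hy : 1 ≤ y)
    (hU : ∀ u : U, x ≤ (univ.filter (fun w => E u w)).card)
    (hW : ∀ w : W, (univ.filter (fun u => E u w)).card ≤ y) :
    ∃ W' : Finset W, (∀ u : U, ∃ w ∈ W', E u w) ∧
      (W'.card : ℝ) ≤ ((Fintype.card W : ℝ) / x) * (1 + Real.log y) := by
  classical
  set m := Fintype.card W with hm
  set a : ℝ := (m : ℝ) / x with hadef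
  have hx0 : (0:ℝ) < x := by exact_mod_cast hx
  have ha0 : 0 ≤ a := by positivity
  -- double counting lemma
  have swap : ∀ A : Finset U, ∑ u ∈ A, (univ.filter (fun w => E u w)).card
      = ∑ w : W, (A.filter (fun u => E u w)).card := by
    intro A
    simp_rw [card_filter]
    exact Finset.sum_comm
  -- greedy induction
  have key : ∀ n : ℕ, ∀ A : Finset U, A.card = n →
      ∃ S : Finset W, (∀ u ∈ A, ∃ w ∈ S, E u w) ∧ (S.card : ℝ) ≤ hfun a n := by
    intro n
    induction n using Nat.strong_induction_on with
    | _ n ih =>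
      intro A hA
      rcases Nat.eq_zero_or_pos n with h0 | hpos
      · refine ⟨∅, ?_, ?_⟩
        · intro u hu
          have : A = ∅ := card_eq_zero.mp (by rw [hA, h0])
          simp [this] at hu
        · simp only [card_empty, Nat.cast_zero]
          rw [hfun, h0]
          simp [ha0]
      · -- A nonempty
        obtain ⟨u0, hu0⟩ := card_pos.mp (hA ▸ hpos)
        have hxm : x ≤ m := le_trans (hU u0) (by simpa using card_le_card (subset_univ _))
        have ha1 : (1:ℝ) ≤ a := by
          rw [hadef, le_div_iff₀ hx0, one_mul]
          exact_mod_cast hxm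
        have hm0 : (0:ℝ) < m := by
          have : 1 ≤ m := le_trans hx hxm
          exact_mod_cast this
        have hWne : (univ : Finset W).Nonempty := by
          rw [← Finset.card_pos, card_univ]
          omega
        -- total coverage
        have hsum : n * x ≤ ∑ w : W, (A.filter (fun u => E u w)).card := by
          calc n * x = ∑ _u ∈ A, x := by rw [sum_const, hA, smul_eq_mul]
            _ ≤ ∑ u ∈ A, (univ.filter (fun w => E u w)).card :=
                sum_le_sum (fun u _ => hU u)
            _ = _ := swap A
        -- pick a good w
        obtain ⟨w, -, hw⟩ := Finset.exists_le_of_sum_le (f := fun _ : W => n * x)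
          (g := fun w : W => m * (A.filter (fun u => E u w)).card) hWne
          (by
            rw [sum_const, card_univ, smul_eq_mul, ← Finset.mul_sum]
            exact Nat.mul_le_mul_left m hsum)
        set c := (A.filter (fun u => E u w)).card with hc
        have hc1 : 1 ≤ c := by
          rcases Nat.eq_zero_or_pos c with h | h
          · exfalso; rw [h, Nat.mul_zero] at hw
            have : 1 ≤ n * x := Nat.one_le_iff_ne_zero.mpr (by positivity)
            omega
          · exact h
        set A' := A.filter (fun u => ¬ E u w) with hA'
        have hct : c + A'.card = n := by
          rw [hc, hA', ← hA]
          exact card_filter_add_card_filter_not _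
        set t' := A'.card with ht'
        have htn : t' < n := by omega
        obtain ⟨S', hcov', hcard'⟩ := ih t' htn A' rfl
        refine ⟨insert w S', ?_, ?_⟩
        · intro u hu
          by_cases hE : E u w
          · exact ⟨w, mem_insert_self _ _, hE⟩
          · obtain ⟨w', hw', hE'⟩ := hcov' u (by rw [hA']; exact mem_filter.mpr ⟨hu, hE⟩)
            exact ⟨w', mem_insert_of_mem hw', hE'⟩
        · have hstep : hfun a t' + 1 ≤ hfun a n := by
            apply hfun_step a ha1
            · -- (t' : ℝ) ≤ n - n / a
              have hwR : (n:ℝ) * x ≤ m * c := by exact_mod_cast hw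
              have hna : (n:ℝ) / a = n * x / m := by
                rw [hadef, div_div_eq_mul_div]
              have hcR : (n:ℝ) / a ≤ c := by
                rw [hna, div_le_iff₀ hm0]
                linarith [hwR]
              have : (t':ℝ) = n - c := by
                have := hct
                push_cast [← this]
                ring
              rw [this]
              linarith
            · have : t' + 1 ≤ n := htn
              exact_mod_cast this
          calc ((insert w S').card : ℝ) ≤ S'.card + 1 := by
                exact_mod_cast card_insert_le _ _
            _ ≤ hfun a t' + 1 := by linarith
            _ ≤ hfun a n := hstep
  obtain ⟨S, hcov, hcard⟩ := key (Fintype.card U) univ (by rw [card_univ])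
  refine ⟨S, fun u => hcov u (mem_univ u), le_trans hcard ?_⟩
  have hlogy : 0 ≤ Real.log y := Real.log_nonneg (by exact_mod_cast hy)
  rw [hfun]
  split_ifs with hcU
  · calc (Fintype.card U : ℝ) ≤ a := hcU
      _ = a * 1 := (mul_one a).symm
      _ ≤ a * (1 + Real.log y) := by
        apply mul_le_mul_of_nonneg_left _ ha0
        linarith
  · push_neg at hcU
    have hU1 : 1 ≤ Fintype.card U := by
      by_contra h
      push_neg at h
      interval_cases h' : Fintype.card U
      · simp [h'] at hcU; linarith
    have hUne : Nonempty U := Fintype.card_pos_iff.mp hU1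
    obtain ⟨u0⟩ := hUne
    have hxm : x ≤ m := le_trans (hU u0) (by simpa using card_le_card (subset_univ _))
    have ha1 : (1:ℝ) ≤ a := by
      rw [hadef, le_div_iff₀ hx0, one_mul]
      exact_mod_cast hxm
    have hm0 : (0:ℝ) < m := by
      have : 1 ≤ m := le_trans hx hxm
      exact_mod_cast this
    -- card U * x ≤ m * y
    have hcnt : Fintype.card U * x ≤ m * y := by
      calc Fintype.card U * x = ∑ _u : U, x := by rw [sum_const, card_univ, smul_eq_mul]
        _ ≤ ∑ u : U, (univ.filter (fun w => E u w)).card := sum_le_sum (fun u _ => hU u)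
        _ = ∑ w : W, ((univ : Finset U).filter (fun u => E u w)).card := swap univ
        _ ≤ ∑ _w : W, y := sum_le_sum (fun w _ => hW w)
        _ = m * y := by rw [sum_const, card_univ, smul_eq_mul]
    have hdiv : (Fintype.card U : ℝ) / a ≤ y := by
      rw [hadef, div_div_eq_mul_div, div_le_iff₀ hm0]
      calc (Fintype.card U : ℝ) * x ≤ m * y := by exact_mod_cast hcnt
        _ = y * m := mul_comm _ _
    have hlog : Real.log ((Fintype.card U : ℝ) / a) ≤ Real.log y :=
      Real.log_le_log (by positivity) hdiv
    have : a * (1 + Real.log ((Fintype.card U : ℝ) / a)) ≤ a * (1 + Real.log y) := by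
      apply mul_le_mul_of_nonneg_left _ ha0
      linarith
    exact this
end

section
/- Let k ≤ ⌈n/2⌉, fix X ⊆ ⋃_{i>k} L_i, and for Y a union of layers write Y^X = {v ∈ Y : v ⊄ w for all w ∈ X}. For A ⊆ L^X_{k−1} write N⁺(A) for the set of elements of L^X_k containing some element of A, Int(A) = {v ∈ L^X_{k−2} : N⁺(v) ⊆ A}, and w(A) = λ^{|A|}(1+λ)^{−|N⁺(A)|} · ∑_{B ⊆ Int(A)} λ^{|B|−|N⁺(B)|}. Then ∑_{S ⊆ L^X_{k−2} ∪ L^X_{k−1} ∪ L^X_k, S antichain} λ^{|S|} = (1+λ)^{|L^X_k|} · ∑_{A ⊆ L^X_{k−1}} w(A), where the sum ranges over all subsets A of L^X_{k−1} (each such A being an antichain). -/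
open Finset
open scoped Classical

/-- The `i`-th layer of `B_n` restricted by `X`: elements `v` of the layer with
`v ⊄ w` for all `w ∈ X`. -/
noncomputable def layerX (n : ℕ) (X : Finset (Finset (Fin n))) (i : ℕ) :
    Finset (Finset (Fin n)) :=
  univ.filter (fun v => v.card = i ∧ ∀ w ∈ X, ¬ v ⊂ w)

/-- The up-neighbourhood of `A` in the restricted layer `L^X_j`: elements of `L^X_j`
strictly containing some element of `A`. -/
noncomputable def upN (n : ℕ) (X : Finset (Finset (Fin n))) (j : ℕ)
    (A : Finset (Finset (Fin n))) : Finset (Finset (Fin n)) :=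
  (layerX n X j).filter (fun x => ∃ v ∈ A, v ⊂ x)

/-- The interior of `A ⊆ L^X_{k−1}`: elements `v` of `L^X_{k−2}` with `N⁺(v) ⊆ A`. -/
noncomputable def interiorX (n : ℕ) (X : Finset (Finset (Fin n))) (k : ℕ)
    (A : Finset (Finset (Fin n))) : Finset (Finset (Fin n)) :=
  (layerX n X (k - 2)).filter (fun v => upN n X (k - 1) {v} ⊆ A)

/-- The polymer weight `w(A) = λ^{|A|}(1+λ)^{−|N⁺(A)|} ∑_{B ⊆ Int(A)} λ^{|B|−|N⁺(B)|}`. -/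
noncomputable def polyWeight (n : ℕ) (X : Finset (Finset (Fin n))) (k : ℕ) (lam : ℝ)
    (A : Finset (Finset (Fin n))) : ℝ :=
  lam ^ A.card * ((1 + lam) ^ (upN n X k A).card)⁻¹ *
    ∑ B ∈ (interiorX n X k A).powerset,
      lam ^ ((B.card : ℤ) - ((upN n X (k - 1) B).card : ℤ))

/-- `S` is an antichain: its elements are pairwise incomparable under inclusion. -/
def IsAntichainF {n : ℕ} (S : Finset (Finset (Fin n))) : Prop :=
  ∀ u ∈ S, ∀ v ∈ S, u ≠ v → ¬ u ⊆ v

section Helpers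

variable {n : ℕ} {X : Finset (Finset (Fin n))}

lemma mem_layerX {i : ℕ} {v : Finset (Fin n)} :
    v ∈ layerX n X i ↔ v.card = i ∧ ∀ w ∈ X, ¬ v ⊂ w := by
  simp [layerX]

lemma mem_upN {j : ℕ} {A : Finset (Finset (Fin n))} {x : Finset (Fin n)} :
    x ∈ upN n X j A ↔ x ∈ layerX n X j ∧ ∃ v ∈ A, v ⊂ x := mem_filter

lemma upN_subset_layer {j : ℕ} {A : Finset (Finset (Fin n))} :
    upN n X j A ⊆ layerX n X j := filter_subset _ _

lemma upN_mono {j : ℕ} {A A' : Finset (Finset (Fin n))} (h : A ⊆ A') :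
    upN n X j A ⊆ upN n X j A' := by
  intro x hx
  rw [mem_upN] at hx ⊢
  obtain ⟨h1, v, hv, hvx⟩ := hx
  exact ⟨h1, v, h hv, hvx⟩

lemma disjoint_layerX {i j : ℕ} (h : i ≠ j) :
    Disjoint (layerX n X i) (layerX n X j) := by
  rw [disjoint_left]
  intro v hv hv'
  exact h ((mem_layerX.1 hv).1 ▸ (mem_layerX.1 hv').1)

lemma upN_subset_of_subset_interior {k : ℕ} {A B : Finset (Finset (Fin n))}
    (hB : B ⊆ interiorX n X k A) : upN n X (k - 1) B ⊆ A := by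
  intro u hu
  obtain ⟨h1, v, hv, hvu⟩ := mem_upN.1 hu
  have := (mem_filter.1 (hB hv)).2
  exact this (mem_upN.2 ⟨h1, v, mem_singleton_self v, hvu⟩)

/-- intermediate element lemma -/
lemma exists_mid {k : ℕ} (hk2 : 2 ≤ k) {v x : Finset (Fin n)}
    (hv : v ∈ layerX n X (k - 2)) (hx : x.card = k) (hvx : v ⊂ x) :
    ∃ u ∈ layerX n X (k - 1), v ⊂ u ∧ u ⊂ x := by
  obtain ⟨hvc, hvX⟩ := mem_layerX.1 hv
  obtain ⟨a, hax, hav⟩ : ∃ a ∈ x, a ∉ v := by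
    by_contra h
    push_neg at h
    exact hvx.2 h
  refine ⟨insert a v, ?_, ?_, ?_⟩
  · rw [mem_layerX]
    constructor
    · rw [card_insert_of_notMem hav, hvc]; omega
    · intro w hw hiw
      exact hvX w hw (lt_of_lt_of_le (ssubset_insert hav) hiw.1)
  · exact ssubset_insert hav
  · refine lt_of_le_of_ne (insert_subset hax hvx.1) ?_
    intro h
    have := congrArg Finset.card h
    rw [card_insert_of_notMem hav, hvc, hx] at this
    omega

lemma not_subset_of_card_eq {u v : Finset (Fin n)} (h : u.card = v.card) (hne : u ≠ v) :
    ¬ u ⊆ v := fun hsub => hne (Finset.eq_of_subset_of_card_le hsub (le_of_eq h.symm))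

end Helpers

section Comb

variable {n k : ℕ} {X : Finset (Finset (Fin n))}

/-- Forward: antichain data. -/
lemma fwd_C_subset (hk2 : 2 ≤ k) {S : Finset (Finset (Fin n))}
    (hanti : IsAntichainF S) :
    S ∩ layerX n X k ⊆ layerX n X k \
      upN n X k ((S ∩ layerX n X (k - 1)) ∪ upN n X (k - 1) (S ∩ layerX n X (k - 2))) := by
  intro x hx
  obtain ⟨hxS, hxL⟩ := mem_inter.1 hx
  rw [mem_sdiff]
  refine ⟨hxL, fun hxN => ?_⟩
  obtain ⟨-, u, hu, hux⟩ := mem_upN.1 hxN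
  rcases mem_union.1 hu with hu | hu
  · obtain ⟨huS, huL⟩ := mem_inter.1 hu
    exact hanti u huS x hxS (fun h => absurd h.symm (ne_of_ssubset (h ▸ hux))) hux.1
  · obtain ⟨-, v, hv, hvu⟩ := mem_upN.1 hu
    obtain ⟨hvS, hvL⟩ := mem_inter.1 hv
    have hvx : v ⊂ x := hvu.trans hux
    exact hanti v hvS x hxS (ne_of_ssubset hvx) hvx.1

lemma fwd_S1_disj (hk2 : 2 ≤ k) {S : Finset (Finset (Fin n))}
    (hanti : IsAntichainF S) :
    Disjoint (S ∩ layerX n X (k - 1)) (upN n X (k - 1) (S ∩ layerX n X (k - 2))) := by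
  rw [Finset.disjoint_left]
  intro u hu huN
  obtain ⟨huS, huL⟩ := mem_inter.1 hu
  obtain ⟨-, v, hv, hvu⟩ := mem_upN.1 huN
  obtain ⟨hvS, hvL⟩ := mem_inter.1 hv
  exact hanti v hvS u huS (ne_of_ssubset hvu) hvu.1

/-- Decomposition of `S` into its pieces. -/
lemma S_decomp {S : Finset (Finset (Fin n))}
    (hS : S ⊆ layerX n X (k - 2) ∪ layerX n X (k - 1) ∪ layerX n X k) :
    (S ∩ layerX n X (k - 2)) ∪ (S ∩ layerX n X (k - 1)) ∪ (S ∩ layerX n X k) = S := by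
  rw [← Finset.inter_union_distrib_left, ← Finset.inter_union_distrib_left]
  exact Finset.inter_eq_left.2 hS

/-- Backward: the reconstructed set is an antichain. -/
lemma bwd_antichain (hk2 : 2 ≤ k) {A B C : Finset (Finset (Fin n))}
    (hA : A ⊆ layerX n X (k - 1)) (hB : B ⊆ interiorX n X k A)
    (hC : C ⊆ layerX n X k \ upN n X k A) :
    IsAntichainF (B ∪ (A \ upN n X (k - 1) B) ∪ C) := by
  have hBL : B ⊆ layerX n X (k - 2) := hB.trans (filter_subset _ _)
  have hCL : C ⊆ layerX n X k := hC.trans (sdiff_subset)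
  have hCN : ∀ x ∈ C, x ∉ upN n X k A := fun x hx => (mem_sdiff.1 (hC hx)).2
  -- cards
  have cardB : ∀ v ∈ B, v.card = k - 2 := fun v hv => (mem_layerX.1 (hBL hv)).1
  have cardA : ∀ v ∈ A, v.card = k - 1 := fun v hv => (mem_layerX.1 (hA hv)).1
  have cardC : ∀ v ∈ C, v.card = k := fun v hv => (mem_layerX.1 (hCL hv)).1
  -- key: elements of B below elements of C land in N⁺(A)
  have keyBC : ∀ v ∈ B, ∀ x ∈ C, ¬ v ⊆ x := by
    intro v hv x hx hsub
    have hvx : v ⊂ x := lt_of_le_of_ne hsub (by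
      intro h; have := cardB v hv; rw [h, cardC x hx] at this; omega)
    obtain ⟨u, huL, hvu, hux⟩ := exists_mid hk2 (hBL hv) (cardC x hx) hvx
    have huA : u ∈ A := (mem_filter.1 (hB hv)).2 (mem_upN.2 ⟨huL, v, mem_singleton_self v, hvu⟩)
    exact hCN x hx (mem_upN.2 ⟨hCL hx, u, huA, hux⟩)
  intro u hu v hv hne hsub
  have hcard : u.card ≤ v.card := card_le_card hsub
  rcases mem_union.1 hu with hu' | huC
  · rcases mem_union.1 hu' with huB | huA
    · -- u ∈ B, card k-2
      rcases mem_union.1 hv with hv' | hvC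
      · rcases mem_union.1 hv' with hvB | hvA
        · exact not_subset_of_card_eq (by rw [cardB u huB, cardB v hvB]) hne hsub
        · -- u ∈ B, v ∈ A \ N⁺B : then v ∈ N⁺B, contradiction
          obtain ⟨hvA', hvN⟩ := mem_sdiff.1 hvA
          have huv : u ⊂ v := lt_of_le_of_ne hsub hne
          exact hvN (mem_upN.2 ⟨hA hvA', u, huB, huv⟩)
      · exact keyBC u huB v hvC hsub
    · -- u ∈ A \ N⁺B, card k-1
      obtain ⟨huA', -⟩ := mem_sdiff.1 huA
      rcases mem_union.1 hv with hv' | hvC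
      · rcases mem_union.1 hv' with hvB | hvA
        · rw [cardA u huA', cardB v hvB] at hcard; omega
        · exact not_subset_of_card_eq
            (by rw [cardA u huA', cardA v (mem_sdiff.1 hvA).1]) hne hsub
      · -- v ∈ C : v ∈ N⁺(A)
        have huv : u ⊂ v := lt_of_le_of_ne hsub hne
        exact hCN v hvC (mem_upN.2 ⟨hCL hvC, u, huA', huv⟩)
  · -- u ∈ C, card k
    rcases mem_union.1 hv with hv' | hvC
    · rcases mem_union.1 hv' with hvB | hvA
      · rw [cardC u huC, cardB v hvB] at hcard; omega
      · rw [cardC u huC, cardA v (mem_sdiff.1 hvA).1] at hcard; omega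
    · exact not_subset_of_card_eq (by rw [cardC u huC, cardC v hvC]) hne hsub

end Comb

section Alg

variable {n k : ℕ} {X : Finset (Finset (Fin n))}

lemma sum_powerset_pow (s : Finset (Finset (Fin n))) (lam : ℝ) :
    ∑ C ∈ s.powerset, lam ^ C.card = (1 + lam) ^ s.card := by
  have := Finset.prod_add (fun _ : Finset (Fin n) => lam) (fun _ => (1 : ℝ)) s
  simp only [Finset.prod_const, one_pow, mul_one] at this
  rw [add_comm 1 lam, this]

/-- cardinality of the reconstructed antichain -/
lemma recon_card (hk2 : 2 ≤ k) {A B C : Finset (Finset (Fin n))}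
    (hA : A ⊆ layerX n X (k - 1)) (hB : B ⊆ interiorX n X k A)
    (hC : C ⊆ layerX n X k \ upN n X k A) :
    (B ∪ (A \ upN n X (k - 1) B) ∪ C).card
      = B.card + (A.card - (upN n X (k - 1) B).card) + C.card := by
  have hBL : B ⊆ layerX n X (k - 2) := hB.trans (Finset.filter_subset _ _)
  have hA1 : A \ upN n X (k - 1) B ⊆ layerX n X (k - 1) := (Finset.sdiff_subset).trans hA
  have hCL : C ⊆ layerX n X k := hC.trans Finset.sdiff_subset
  have d1 : Disjoint B (A \ upN n X (k - 1) B) :=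
    Finset.disjoint_of_subset_left hBL (Finset.disjoint_of_subset_right hA1
      (disjoint_layerX (by omega)))
  have d2 : Disjoint (B ∪ (A \ upN n X (k - 1) B)) C := by
    refine Finset.disjoint_of_subset_right hCL (Finset.disjoint_union_left.2 ⟨?_, ?_⟩)
    · exact Finset.disjoint_of_subset_left hBL (disjoint_layerX (by omega))
    · exact Finset.disjoint_of_subset_left hA1 (disjoint_layerX (by omega))
  rw [Finset.card_union_of_disjoint d2, Finset.card_union_of_disjoint d1,
    Finset.card_sdiff_of_subset (upN_subset_of_subset_interior hB)]

lemma perA (hk2 : 2 ≤ k) {lam : ℝ} (hlam : 0 < lam) {A : Finset (Finset (Fin n))}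
    (hA : A ⊆ layerX n X (k - 1)) :
    (1 + lam) ^ (layerX n X k).card * polyWeight n X k lam A
      = ∑ B ∈ (interiorX n X k A).powerset,
          ∑ C ∈ (layerX n X k \ upN n X k A).powerset,
            lam ^ ((B ∪ (A \ upN n X (k - 1) B) ∪ C).card) := by
  have h1lam : (0:ℝ) < 1 + lam := by linarith
  have hNk : upN n X k A ⊆ layerX n X k := upN_subset_layer
  have hNkc : (upN n X k A).card ≤ (layerX n X k).card := Finset.card_le_card hNk
  rw [polyWeight]
  have e1 : (1 + lam) ^ (layerX n X k).card *
      (lam ^ A.card * ((1 + lam) ^ (upN n X k A).card)⁻¹ *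
        ∑ B ∈ (interiorX n X k A).powerset,
          lam ^ ((B.card : ℤ) - ((upN n X (k - 1) B).card : ℤ)))
      = lam ^ A.card * (1 + lam) ^ ((layerX n X k).card - (upN n X k A).card) *
        ∑ B ∈ (interiorX n X k A).powerset,
          lam ^ ((B.card : ℤ) - ((upN n X (k - 1) B).card : ℤ)) := by
    rw [pow_sub₀ _ (ne_of_gt h1lam) hNkc]; ring
  rw [e1, ← Finset.card_sdiff_of_subset hNk, ← sum_powerset_pow, Finset.mul_sum, Finset.mul_sum]
  refine Finset.sum_congr rfl (fun B hB => ?_)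
  rw [Finset.sum_mul]
  refine Finset.sum_congr rfl (fun C hC => ?_)
  rw [Finset.mem_powerset] at hB hC
  rw [recon_card hk2 hA hB hC]
  have hNB : upN n X (k - 1) B ⊆ A := upN_subset_of_subset_interior hB
  have hNBc : (upN n X (k - 1) B).card ≤ A.card := Finset.card_le_card hNB
  rw [zpow_sub₀ (ne_of_gt hlam), zpow_natCast, zpow_natCast, pow_add, pow_add,
    pow_sub₀ _ (ne_of_gt hlam) hNBc]
  field_simp
end Alg

/-- The antichain partition function of the three restricted consecutive layers
`L^X_{k−2} ∪ L^X_{k−1} ∪ L^X_k` equals `(1+λ)^{|L^X_k|} ∑_{A ⊆ L^X_{k−1}} w(A)`. -/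
theorem stmt6 (n k : ℕ) (hk2 : 2 ≤ k) (hk : k ≤ (n + 1) / 2)
    (X : Finset (Finset (Fin n))) (hX : ∀ w ∈ X, k < w.card)
    (lam : ℝ) (hlam : 0 < lam) :
    (∑ S ∈ ((layerX n X (k - 2) ∪ layerX n X (k - 1) ∪ layerX n X k).powerset).filter
        (fun S => IsAntichainF S), lam ^ S.card)
      = (1 + lam) ^ (layerX n X k).card *
          ∑ A ∈ (layerX n X (k - 1)).powerset, polyWeight n X k lam A := by
  classical
  set L2 := layerX n X (k - 2) with hL2
  set L1 := layerX n X (k - 1) with hL1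
  set L0 := layerX n X k with hL0
  set T := L1.powerset.sigma
      (fun A => (interiorX n X k A).powerset ×ˢ (L0 \ upN n X k A).powerset) with hT
  have main : (∑ S ∈ ((L2 ∪ L1 ∪ L0).powerset).filter (fun S => IsAntichainF S),
      lam ^ S.card)
      = ∑ p ∈ T, lam ^ ((p.2.1 ∪ (p.1 \ upN n X (k - 1) p.2.1) ∪ p.2.2).card) := by
    refine Finset.sum_nbij'
      (fun S => ⟨(S ∩ L1) ∪ upN n X (k - 1) (S ∩ L2), (S ∩ L2, S ∩ L0)⟩)
      (fun p => p.2.1 ∪ (p.1 \ upN n X (k - 1) p.2.1) ∪ p.2.2) ?_ ?_ ?_ ?_ ?_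
    · -- forward well-defined
      intro S hS
      rw [Finset.mem_filter, Finset.mem_powerset] at hS
      obtain ⟨hSsub, hanti⟩ := hS
      rw [hT, Finset.mem_sigma, Finset.mem_product, Finset.mem_powerset,
        Finset.mem_powerset, Finset.mem_powerset]
      refine ⟨Finset.union_subset Finset.inter_subset_right upN_subset_layer, ?_,
        fwd_C_subset hk2 hanti⟩
      intro v hv
      rw [interiorX, Finset.mem_filter]
      refine ⟨(Finset.mem_inter.1 hv).2, ?_⟩
      exact (upN_mono (Finset.singleton_subset_iff.2 hv)).trans Finset.subset_union_right
    · -- backward well-defined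
      rintro ⟨A, B, C⟩ hp
      rw [hT, Finset.mem_sigma, Finset.mem_product, Finset.mem_powerset,
        Finset.mem_powerset, Finset.mem_powerset] at hp
      obtain ⟨hA, hB, hC⟩ := hp
      rw [Finset.mem_filter, Finset.mem_powerset]
      constructor
      · refine Finset.union_subset (Finset.union_subset ?_ ?_) ?_
        · exact (hB.trans (Finset.filter_subset _ _)).trans
            (Finset.subset_union_left.trans Finset.subset_union_left)
        · exact (Finset.sdiff_subset.trans hA).trans
            (Finset.subset_union_right.trans Finset.subset_union_left)
        · exact (hC.trans Finset.sdiff_subset).trans Finset.subset_union_right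
      · exact bwd_antichain hk2 hA hB hC
    · -- left inverse
      intro S hS
      rw [Finset.mem_filter, Finset.mem_powerset] at hS
      obtain ⟨hSsub, hanti⟩ := hS
      dsimp only
      rw [Finset.union_sdiff_cancel_right (fwd_S1_disj hk2 hanti)]
      exact S_decomp hSsub
    · -- right inverse
      rintro ⟨A, B, C⟩ hp
      rw [hT, Finset.mem_sigma, Finset.mem_product, Finset.mem_powerset,
        Finset.mem_powerset, Finset.mem_powerset] at hp
      obtain ⟨hA, hB, hC⟩ := hp
      have hBL : B ⊆ L2 := hB.trans (Finset.filter_subset _ _)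
      have hDL : A \ upN n X (k - 1) B ⊆ L1 := Finset.sdiff_subset.trans hA
      have hCL : C ⊆ L0 := hC.trans Finset.sdiff_subset
      have hNB : upN n X (k - 1) B ⊆ A := upN_subset_of_subset_interior hB
      have d12 : Disjoint L1 L2 := disjoint_layerX (by omega)
      have d02 : Disjoint L0 L2 := disjoint_layerX (by omega)
      have d01 : Disjoint L0 L1 := disjoint_layerX (by omega)
      have i2 : (B ∪ (A \ upN n X (k - 1) B) ∪ C) ∩ L2 = B := by
        rw [Finset.union_inter_distrib_right, Finset.union_inter_distrib_right,
          Finset.inter_eq_left.2 hBL,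
          Finset.disjoint_iff_inter_eq_empty.1 (Finset.disjoint_of_subset_left hDL d12),
          Finset.disjoint_iff_inter_eq_empty.1 (Finset.disjoint_of_subset_left hCL d02),
          Finset.union_empty, Finset.union_empty]
      have i1 : (B ∪ (A \ upN n X (k - 1) B) ∪ C) ∩ L1 = A \ upN n X (k - 1) B := by
        rw [Finset.union_inter_distrib_right, Finset.union_inter_distrib_right,
          Finset.inter_eq_left.2 hDL,
          Finset.disjoint_iff_inter_eq_empty.1 (Finset.disjoint_of_subset_left hBL d12.symm),
          Finset.disjoint_iff_inter_eq_empty.1 (Finset.disjoint_of_subset_left hCL d01),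
          Finset.empty_union, Finset.union_empty]
      have i0 : (B ∪ (A \ upN n X (k - 1) B) ∪ C) ∩ L0 = C := by
        rw [Finset.union_inter_distrib_right, Finset.union_inter_distrib_right,
          Finset.inter_eq_left.2 hCL,
          Finset.disjoint_iff_inter_eq_empty.1 (Finset.disjoint_of_subset_left hBL d02.symm),
          Finset.disjoint_iff_inter_eq_empty.1 (Finset.disjoint_of_subset_left hDL d01.symm),
          Finset.empty_union, Finset.empty_union]
      dsimp only
      rw [i2, i1, i0, Finset.sdiff_union_of_subset hNB]
    · -- value equality
      intro S hS
      rw [Finset.mem_filter, Finset.mem_powerset] at hS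
      obtain ⟨hSsub, hanti⟩ := hS
      dsimp only
      rw [Finset.union_sdiff_cancel_right (fwd_S1_disj hk2 hanti), S_decomp hSsub]
  rw [main, hT, Finset.sum_sigma, Finset.mul_sum]
  refine Finset.sum_congr rfl (fun A hA => ?_)
  rw [Finset.sum_product]
  exact (perA hk2 hlam (Finset.mem_powerset.1 hA)).symm
end

section
/- Fix k ≤ ⌊n/2⌋ and embed B_n into B_{2n−2k} via w ↦ w⁺ := w ∪ {n+1, …, 2n−2k}. For X ⊆ ⋃_{i > k} L_i(B_n), let X' = {w⁺ : w ∈ X} ∪ ⋃_{j=n+1}^{2n−2k} {[2n−2k] \ {j}}. Then the map A ↦ A⁺ = {w⁺ : w ∈ A} is a size-preserving bijection between antichains contained in L^X_{[k−1,k]}(B_n) and antichains contained in L̄^{X'}_{[n−k−1, n−k]}(B_{2n−2k}), where for layers Y and a set S, Y^S = {v ∈ Y : v ⊄ u for all u ∈ S}. -/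
open Finset

/-- `S` is an antichain of finite sets: pairwise incomparable under inclusion. -/
def FinAntichain (S : Finset (Finset ℕ)) : Prop :=
  ∀ u ∈ S, ∀ v ∈ S, u ≠ v → ¬ u ⊆ v

/-- The `i`-th layer of the Boolean lattice on ground set `range n`, restricted by
`X`: elements `v` of the layer with `v ⊄ w` for all `w ∈ X`. -/
def layerRes (n i : ℕ) (X : Finset (Finset ℕ)) : Set (Finset ℕ) :=
  {v | v ⊆ Finset.range n ∧ v.card = i ∧ ∀ w ∈ X, ¬ v ⊂ w}

lemma emb_subset {n m : ℕ} {w v : Finset ℕ} (hw : w ⊆ Finset.range n)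
    (_hv : v ⊆ Finset.range n) :
    w ∪ Finset.Ico n m ⊆ v ∪ Finset.Ico n m ↔ w ⊆ v := by
  constructor
  · intro h x hx
    rcases mem_union.mp (h (mem_union_left _ hx)) with h1 | h1
    · exact h1
    · have := mem_range.mp (hw hx); have := (mem_Ico.mp h1).1; omega
  · intro h
    exact union_subset_union_left h

lemma emb_inj {n m : ℕ} {w v : Finset ℕ} (hw : w ⊆ Finset.range n)
    (hv : v ⊆ Finset.range n)
    (h : w ∪ Finset.Ico n m = v ∪ Finset.Ico n m) : w = v :=
  subset_antisymm ((emb_subset hw hv).mp h.le) ((emb_subset hv hw).mp h.ge)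

lemma emb_ssubset {n m : ℕ} {w v : Finset ℕ} (hw : w ⊆ Finset.range n)
    (hv : v ⊆ Finset.range n) :
    w ∪ Finset.Ico n m ⊂ v ∪ Finset.Ico n m ↔ w ⊂ v := by
  rw [Finset.ssubset_iff_subset_ne, Finset.ssubset_iff_subset_ne, emb_subset hw hv]
  constructor
  · rintro ⟨h1, h2⟩; exact ⟨h1, fun h => h2 (by rw [h])⟩
  · rintro ⟨h1, h2⟩; exact ⟨h1, fun h => h2 (emb_inj hw hv h)⟩

lemma emb_card {n m : ℕ} {w : Finset ℕ} (hw : w ⊆ Finset.range n) :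
    (w ∪ Finset.Ico n m).card = w.card + (m - n) := by
  rw [card_union_of_disjoint, Nat.card_Ico]
  exact disjoint_left.mpr fun x hx hx2 => by
    have := mem_range.mp (hw hx); have := (mem_Ico.mp hx2).1; omega

/-- The embedding trick: for `k ≤ ⌊n/2⌋` and `X` above layer `k`, the map
`w ↦ w⁺ = w ∪ {n, …, 2n−2k−1}` (0-indexed ground sets) induces a size-preserving
bijection between antichains contained in `L^X_{[k−1,k]}(B_n)` and antichains
contained in `L̄^{X'}_{[n−k−1, n−k]}(B_{2n−2k})`. -/
theorem stmt13 (n k : ℕ) (hk1 : 1 ≤ k) (hk : k ≤ n / 2)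
    (X : Finset (Finset ℕ)) (hX : ∀ w ∈ X, w ⊆ Finset.range n ∧ k < w.card)
    (X' : Finset (Finset ℕ))
    (hX' : X' = X.image (fun w => w ∪ Finset.Ico n (2 * n - 2 * k)) ∪
      (Finset.Ico n (2 * n - 2 * k)).image
        (fun j => (Finset.range (2 * n - 2 * k)).erase j)) :
    Set.BijOn
      (fun S : Finset (Finset ℕ) => S.image (fun w => w ∪ Finset.Ico n (2 * n - 2 * k)))
      {S | FinAntichain S ∧
        ∀ v ∈ S, v ∈ layerRes n (k - 1) X ∪ layerRes n k X}
      {S | FinAntichain S ∧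
        ∀ v ∈ S, v ∈ layerRes (2 * n - 2 * k) (n - k - 1) X'
          ∪ layerRes (2 * n - 2 * k) (n - k) X'}
    ∧ ∀ S : Finset (Finset ℕ), FinAntichain S →
        (∀ v ∈ S, v ∈ layerRes n (k - 1) X ∪ layerRes n k X) →
        (S.image (fun w => w ∪ Finset.Ico n (2 * n - 2 * k))).card = S.card := by
  have hkn : 2 * k ≤ n := by omega
  -- elements of the source layers are subsets of `range n`
  have hsub : ∀ v : Finset ℕ, v ∈ layerRes n (k - 1) X ∪ layerRes n k X →
      v ⊆ Finset.range n := by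
    rintro v (h | h) <;> exact h.1
  -- forward direction on layers
  have hfwd : ∀ v : Finset ℕ, v ∈ layerRes n (k - 1) X ∪ layerRes n k X →
      v ∪ Finset.Ico n (2 * n - 2 * k) ∈
        layerRes (2 * n - 2 * k) (n - k - 1) X' ∪ layerRes (2 * n - 2 * k) (n - k) X' := by
    intro v hv
    have hvr := hsub v hv
    have hres0 : ∀ w ∈ X, ¬ v ⊂ w := by rcases hv with h | h <;> exact h.2.2
    have hres : ∀ w' ∈ X', ¬ (v ∪ Finset.Ico n (2 * n - 2 * k)) ⊂ w' := by
      intro w' hw'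
      rw [hX'] at hw'
      rcases mem_union.mp hw' with h | h
      · obtain ⟨w, hwX, rfl⟩ := mem_image.mp h
        rw [emb_ssubset hvr (hX w hwX).1]
        exact hres0 w hwX
      · obtain ⟨j, hj, rfl⟩ := mem_image.mp h
        intro hss
        exact (Finset.notMem_erase j _) (hss.subset (mem_union_right _ hj))
    have hsubm : v ∪ Finset.Ico n (2 * n - 2 * k) ⊆ Finset.range (2 * n - 2 * k) := by
      apply union_subset
      · exact hvr.trans (range_subset_range.mpr (by omega))
      · intro x hx; exact mem_range.mpr (mem_Ico.mp hx).2
    rcases hv with h | h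
    · exact Or.inl ⟨hsubm, by rw [emb_card hvr, h.2.1]; omega, hres⟩
    · exact Or.inr ⟨hsubm, by rw [emb_card hvr, h.2.1]; omega, hres⟩
  -- backward direction : members of target layers contain the tail and come from source
  have hbwd : ∀ u : Finset ℕ,
      u ∈ layerRes (2 * n - 2 * k) (n - k - 1) X' ∪ layerRes (2 * n - 2 * k) (n - k) X' →
      (u ∩ Finset.range n) ∈ layerRes n (k - 1) X ∪ layerRes n k X ∧
        (u ∩ Finset.range n) ∪ Finset.Ico n (2 * n - 2 * k) = u := by
    intro u hu
    obtain ⟨hum, hucard, hures⟩ : u ⊆ Finset.range (2 * n - 2 * k) ∧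
        (u.card = n - k - 1 ∨ u.card = n - k) ∧ ∀ w ∈ X', ¬ u ⊂ w := by
      rcases hu with h | h
      · exact ⟨h.1, Or.inl h.2.1, h.2.2⟩
      · exact ⟨h.1, Or.inr h.2.1, h.2.2⟩
    have hIu : Finset.Ico n (2 * n - 2 * k) ⊆ u := by
      intro j hj
      by_contra hjn
      have hjm := mem_Ico.mp hj
      have hjX' : (Finset.range (2 * n - 2 * k)).erase j ∈ X' := by
        rw [hX']; exact mem_union_right _ (mem_image_of_mem _ hj)
      apply hures _ hjX'
      have h1 : u ⊆ (Finset.range (2 * n - 2 * k)).erase j :=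
        subset_erase.mpr ⟨hum, hjn⟩
      have hcard : u.card < ((Finset.range (2 * n - 2 * k)).erase j).card := by
        rw [card_erase_of_mem (mem_range.mpr hjm.2), card_range]
        omega
      rw [Finset.ssubset_iff_subset_ne]
      exact ⟨h1, fun he => by rw [he] at hcard; exact absurd hcard (lt_irrefl _)⟩
    have heq : (u ∩ Finset.range n) ∪ Finset.Ico n (2 * n - 2 * k) = u := by
      ext x
      simp only [mem_union, mem_inter, mem_range, mem_Ico]
      constructor
      · rintro (⟨hx, _⟩ | hx)
        · exact hx
        · exact hIu (mem_Ico.mpr hx)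
      · intro hx
        have hxm := mem_range.mp (hum hx)
        by_cases hxn : x < n
        · exact Or.inl ⟨hx, hxn⟩
        · exact Or.inr ⟨by omega, hxm⟩
    have hvr : u ∩ Finset.range n ⊆ Finset.range n := inter_subset_right
    have hcard : u.card = (u ∩ Finset.range n).card + (2 * n - 2 * k - n) := by
      conv_lhs => rw [← heq]
      exact emb_card hvr
    have hres : ∀ w ∈ X, ¬ (u ∩ Finset.range n) ⊂ w := by
      intro w hwX hss
      apply hures (w ∪ Finset.Ico n (2 * n - 2 * k))
        (by rw [hX']; exact mem_union_left _ (mem_image_of_mem _ hwX))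
      rw [← heq]
      exact (emb_ssubset hvr (hX w hwX).1).mpr hss
    refine ⟨?_, heq⟩
    rcases hucard with h | h
    · exact Or.inl ⟨hvr, by omega, hres⟩
    · exact Or.inr ⟨hvr, by omega, hres⟩
  constructor
  · refine ⟨?_, ?_, ?_⟩
    · -- MapsTo
      rintro S ⟨hSa, hSl⟩
      constructor
      · intro u' hu' v' hv' hne hsub'
        obtain ⟨u, huS, rfl⟩ := mem_image.mp hu'
        obtain ⟨v, hvS, rfl⟩ := mem_image.mp hv'
        have hur := hsub u (hSl u huS)
        have hvr := hsub v (hSl v hvS)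
        have huv : u ≠ v := fun h => hne (by rw [h])
        exact hSa u huS v hvS huv ((emb_subset hur hvr).mp hsub')
      · intro v' hv'
        obtain ⟨v, hvS, rfl⟩ := mem_image.mp hv'
        exact hfwd v (hSl v hvS)
    · -- InjOn
      intro S hS T hT hST
      have key : ∀ A B : Finset (Finset ℕ),
          (∀ v ∈ A, v ∈ layerRes n (k - 1) X ∪ layerRes n k X) →
          (∀ v ∈ B, v ∈ layerRes n (k - 1) X ∪ layerRes n k X) →
          A.image (fun w => w ∪ Finset.Ico n (2 * n - 2 * k)) =
            B.image (fun w => w ∪ Finset.Ico n (2 * n - 2 * k)) →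
          ∀ a ∈ A, a ∈ B := by
        intro A B hA hB hAB a ha
        have : a ∪ Finset.Ico n (2 * n - 2 * k) ∈
            B.image (fun w => w ∪ Finset.Ico n (2 * n - 2 * k)) := by
          rw [← hAB]; exact mem_image_of_mem _ ha
        obtain ⟨b, hbB, hba⟩ := mem_image.mp this
        have hba' := emb_inj (hsub b (hB b hbB)) (hsub a (hA a ha)) hba
        exact hba' ▸ hbB
      ext a
      exact ⟨fun ha => key S T hS.2 hT.2 hST a ha, fun ha => key T S hT.2 hS.2 hST.symm a ha⟩
    · -- SurjOn
      rintro T ⟨hTa, hTl⟩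
      refine ⟨T.image (· ∩ Finset.range n), ⟨?_, ?_⟩, ?_⟩
      · intro a ha b hb hne hab
        obtain ⟨u, huT, rfl⟩ := mem_image.mp ha
        obtain ⟨v, hvT, rfl⟩ := mem_image.mp hb
        have h1 := hbwd u (hTl u huT)
        have h2 := hbwd v (hTl v hvT)
        have huv : u ≠ v := fun h => hne (by rw [h])
        apply hTa u huT v hvT huv
        rw [← h1.2, ← h2.2]
        exact union_subset_union_left hab
      · intro a ha
        obtain ⟨u, huT, rfl⟩ := mem_image.mp ha
        exact (hbwd u (hTl u huT)).1
      · show (T.image (· ∩ Finset.range n)).image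
          (fun w => w ∪ Finset.Ico n (2 * n - 2 * k)) = T
        rw [Finset.image_image]
        have : ∀ u ∈ T,
            ((fun w => w ∪ Finset.Ico n (2 * n - 2 * k)) ∘ (· ∩ Finset.range n)) u = u :=
          fun u hu => (hbwd u (hTl u hu)).2
        rw [Finset.image_congr this]; exact Finset.image_id'
  · intro S hSa hSl
    apply Finset.card_image_of_injOn
    intro a ha b hb hab
    exact emb_inj (hsub a (hSl a ha)) (hsub b (hSl b hb)) hab
end

section
/- Let n be odd and k = (n+1)/2. For every antichain S contained in C_n = L_{k−2} ∪ L_{k−1} ∪ L_k ∪ L_{k+1} of B_n, at least one of the following holds: (i) every 2-linked component A (in the comparability graph induced on L_{k−1} ∪ L_k) of the set N⁺(S ∩ L_{k−2}) ∪ (S ∩ L_{k−1}) satisfies |N⁺(A)| ≥ (1 + 1/n)|A|; or (ii) every 2-linked component A (in the comparability graph induced on L_{k−1} ∪ L_k) of the set N⁻(S ∩ L_{k+1}) ∪ (S ∩ L_k) satisfies |N⁻(A)| ≥ (1 + 1/n)|A|. -/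
open Finset
open scoped Classical

/-- The square of a graph: two distinct vertices are adjacent in `G²` iff their
distance in `G` is at most 2. -/
def graphSquare {V : Type*} (G : SimpleGraph V) : SimpleGraph V where
  Adj u w := u ≠ w ∧ (G.Adj u w ∨ ∃ x, G.Adj u x ∧ G.Adj x w)
  symm := by
    constructor
    intro u w h
    refine ⟨h.1.symm, ?_⟩
    rcases h.2 with h' | ⟨x, hx1, hx2⟩
    · exact Or.inl h'.symm
    · exact Or.inr ⟨x, hx2.symm, hx1.symm⟩
  loopless := ⟨fun u h => h.1 rfl⟩

/-- A finite vertex set `U` is 2-linked in `G` if `G²[U]` is connected. -/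
def TwoLinked {V : Type*} (G : SimpleGraph V) (U : Finset V) : Prop :=
  ((graphSquare G).induce (U : Set V)).Connected

/-- `A` is a 2-linked component of `T` in `G`: a maximal 2-linked subset of `T`. -/
def IsTwoLinkedComponent {V : Type*} (G : SimpleGraph V) (T A : Finset V) : Prop :=
  A ⊆ T ∧ TwoLinked G A ∧ ∀ A' : Finset V, A ⊂ A' → A' ⊆ T → ¬ TwoLinked G A'

/-- The comparability graph of `B_n` induced on the layers `L_{k−1} ∪ L_k`. -/
def compGraph (n k : ℕ) : SimpleGraph (Finset (Fin n)) where
  Adj u v := (u.card = k - 1 ∧ v.card = k ∧ u ⊂ v) ∨ (v.card = k - 1 ∧ u.card = k ∧ v ⊂ u)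
  symm := by constructor; intro u v h; tauto
  loopless := by
    constructor
    intro u h
    rcases h with ⟨-, -, h⟩ | ⟨-, -, h⟩ <;> exact (ssubset_irrefl u) h

/-- Up-neighbours in layer `j`: elements of `L_j` strictly containing an element of `T`. -/
noncomputable def upNbrs (n j : ℕ) (T : Finset (Finset (Fin n))) :
    Finset (Finset (Fin n)) :=
  univ.filter (fun x => x.card = j ∧ ∃ v ∈ T, v ⊂ x)

/-- Down-neighbours in layer `j`: elements of `L_j` strictly contained in an element of `T`. -/
noncomputable def downNbrs (n j : ℕ) (T : Finset (Finset (Fin n))) :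
    Finset (Finset (Fin n)) :=
  univ.filter (fun x => x.card = j ∧ ∃ v ∈ T, x ⊂ v)


open Finset Finset.Colex
open scoped FinsetFamily

attribute [-instance] instDecidableEqFin

namespace Stmt14Aux

lemma downNbrs_eq_shadow {n k : ℕ} (hk : 1 ≤ k) (T : Finset (Finset (Fin n)))
    (hT : ∀ A ∈ T, #A = k) : downNbrs n (k - 1) T = ∂ T := by
  ext x
  simp only [downNbrs, mem_filter, mem_univ, true_and,
    mem_shadow_iff_exists_mem_card_add_one]
  constructor
  · rintro ⟨hxc, v, hv, hxv⟩
    exact ⟨v, hv, hxv.subset, by rw [hT v hv, hxc]; omega⟩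
  · rintro ⟨s, hs, hxs, hcard⟩
    have := hT s hs
    refine ⟨by omega, s, hs, Finset.ssubset_iff_subset_ne.2 ⟨hxs, ?_⟩⟩
    rintro rfl; omega

lemma upNbrs_eq_upShadow {n k : ℕ} (hk : 1 ≤ k) (T : Finset (Finset (Fin n)))
    (hT : ∀ A ∈ T, #A = k - 1) : upNbrs n k T = ∂⁺ T := by
  ext x
  simp only [upNbrs, mem_filter, mem_univ, true_and,
    mem_upShadow_iff_exists_mem_card_add_one]
  constructor
  · rintro ⟨hxc, v, hv, hvx⟩
    exact ⟨v, hv, hvx.subset, by rw [hT v hv, hxc]; omega⟩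
  · rintro ⟨s, hs, hsx, hcard⟩
    have := hT s hs
    refine ⟨by omega, s, hs, Finset.ssubset_iff_subset_ne.2 ⟨hsx, ?_⟩⟩
    rintro rfl; omega

/-- Complementation turns up-neighbours into the shadow. -/
lemma card_upNbrs_eq {n k : ℕ} (hk : 1 ≤ k) (T : Finset (Finset (Fin n)))
    (hT : ∀ A ∈ T, #A = k - 1) : #(upNbrs n k T) = #(∂ Tᶜˢ) := by
  rw [upNbrs_eq_upShadow hk T hT, shadow_compls, card_compls]

/-- Shadow of a full slice of the power set of `G`. -/
lemma shadow_powersetCard {n k : ℕ} (hk : 1 ≤ k) (G : Finset (Fin n)) (hG : k ≤ #G) :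
    ∂ (powersetCard k G) = powersetCard (k - 1) G := by
  ext x
  simp only [mem_shadow_iff_exists_mem_card_add_one, mem_powersetCard]
  constructor
  · rintro ⟨s, ⟨hsG, hsc⟩, hxs, hcard⟩
    exact ⟨hxs.trans hsG, by omega⟩
  · rintro ⟨hxG, hxc⟩
    obtain ⟨s, hxs, hsG, hsc⟩ := exists_subsuperset_card_eq hxG (by omega : #x ≤ k) hG
    exact ⟨s, ⟨hsG, hsc⟩, hxs, by omega⟩

/-- There is an initial segment of colex of any cardinality within a slice. -/
lemma exists_initSeg_card {n r m : ℕ} (hm : m ≤ #(powersetCard r (univ : Finset (Fin n)))) :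
    ∃ 𝒞 : Finset (Finset (Fin n)), Colex.IsInitSeg 𝒞 r ∧ #𝒞 = m := by
  classical
  set L : Finset (Finset (Fin n)) := powersetCard r (univ : Finset (Fin n)) with hL
  set Lc : Finset (Colex (Finset (Fin n))) := L.image toColex with hLc
  have hLcL : #Lc = #L := card_image_of_injOn (fun a _ b _ h => toColex_inj.1 h)
  set iso := Lc.orderIsoOfFin rfl with hiso
  set I : Finset (Fin #Lc) := univ.filter (fun i => (i : ℕ) < m) with hI
  have hIcard : #I = m := by
    have : I = (Finset.range m).attachFin (fun x hx => by
        rw [Finset.mem_range] at hx; omega) := by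
      ext i
      simp [hI, Finset.mem_attachFin, Finset.mem_range]
    rw [this, Finset.card_attachFin, Finset.card_range]
  have hmem : ∀ x, x ∈ (I.image (fun i => (iso i : Colex (Finset (Fin n))))).image ofColex ↔
      ∃ i ∈ I, ofColex (iso i : Colex (Finset (Fin n))) = x := by
    intro x
    simp only [mem_image]
    constructor
    · rintro ⟨c, ⟨i, hi, rfl⟩, rfl⟩; exact ⟨i, hi, rfl⟩
    · rintro ⟨i, hi, rfl⟩; exact ⟨_, ⟨i, hi, rfl⟩, rfl⟩
  have hmemL : ∀ x, x ∈ (I.image (fun i => (iso i : Colex (Finset (Fin n))))).image ofColex → x ∈ L := by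
    intro x hx
    rw [hmem] at hx
    obtain ⟨i, hi, rfl⟩ := hx
    have h2 : ((iso i : Colex (Finset (Fin n)))) ∈ Lc := (iso i).2
    have h2' : ((iso i : Colex (Finset (Fin n)))) ∈ L.image toColex := h2
    rw [mem_image] at h2'
    obtain ⟨a, ha, h3⟩ := h2'
    have h9 : ofColex (iso i : Colex (Finset (Fin n))) = a := congrArg ofColex h3.symm
    rw [h9]; exact ha
  refine ⟨(I.image (fun i => (iso i : Colex (Finset (Fin n))))).image ofColex, ⟨?_, ?_⟩, ?_⟩
  · intro x hx
    rw [mem_coe] at hx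
    have h10 := hmemL x hx
    rw [hL, mem_powersetCard] at h10
    exact h10.2
  · intro s t hs ht
    have htL : t ∈ L := by
      rw [hL, mem_powersetCard]
      exact ⟨subset_univ _, ht.2⟩
    have htLc : toColex t ∈ Lc := by
      have : toColex t ∈ L.image toColex := mem_image.2 ⟨t, htL, rfl⟩
      exact this
    set j := iso.symm ⟨toColex t, htLc⟩ with hj
    rw [hmem] at hs
    obtain ⟨i, hi, rfl⟩ := hs
    have hts : (toColex t : Colex (Finset (Fin n))) < (iso i : Colex (Finset (Fin n))) := by
      have h5 : toColex (ofColex (iso i : Colex (Finset (Fin n)))) = (iso i : Colex (Finset (Fin n))) := rfl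
      rw [← h5]
      exact ht.1
    have hji : j < i := by
      have h4 : (iso j : Lc) < iso i := by
        rw [hj, OrderIso.apply_symm_apply]
        exact_mod_cast hts
      exact iso.lt_iff_lt.1 h4
    have hjI : j ∈ I := by
      rw [hI, mem_filter]
      refine ⟨mem_univ _, ?_⟩
      have h6 : (i : ℕ) < m := (mem_filter.1 hi).2
      have h7 := Fin.lt_iff_val_lt_val.1 hji
      omega
    rw [hmem]
    refine ⟨j, hjI, ?_⟩
    have h8 : (iso j : Colex (Finset (Fin n))) = toColex t := by
      rw [hj, OrderIso.apply_symm_apply]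
    rw [h8, ofColex_toColex]
  · rw [card_image_of_injOn, card_image_of_injOn, hIcard]
    · exact fun a _ b _ h => by
        have : (iso a : Colex (Finset (Fin n))) = iso b := h
        exact_mod_cast iso.injective (Subtype.coe_injective this)
    · exact fun a _ b _ h => by
        exact ofColex.injective h
/-- Local LYM over a ground set `G`. -/
lemma lym_ground {n : ℕ} (G : Finset (Fin n)) (r g : ℕ) (hr : 1 ≤ r)
    (hG : r - 1 + g = #G) (𝒜 : Finset (Finset (Fin n)))
    (hsub : ∀ A ∈ 𝒜, A ⊆ G) (hsized : ∀ A ∈ 𝒜, #A = r) :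
    (#𝒜) * r ≤ #(∂ 𝒜) * g := by
  have hsz : (𝒜 : Set (Finset (Fin n))).Sized r := fun A hA => hsized A hA
  refine card_mul_le_card_mul (fun A B => B ⊆ A) ?_ ?_
  · -- each A ∈ 𝒜 has at least r subsets in the shadow
    intro A hA
    have hsubA : A.image (fun a => A.erase a) ⊆ (∂ 𝒜).bipartiteAbove (fun A B => B ⊆ A) A := by
      intro B hB
      simp only [mem_image] at hB
      obtain ⟨a, ha, rfl⟩ := hB
      exact (mem_bipartiteAbove _).2 ⟨erase_mem_shadow hA ha, erase_subset _ _⟩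
    calc r = #A := (hsized A hA).symm
    _ = #(A.image (fun a => A.erase a)) := (card_image_of_injOn (fun a ha b hb h => (erase_inj A ha).mp h)).symm
    _ ≤ _ := card_le_card hsubA
  · -- each B in the shadow has at most g supersets in 𝒜
    intro B hB
    have hBcard : #B = r - 1 := hsz.shadow hB
    have hBG : B ⊆ G := by
      obtain ⟨A, hA, hBA, -⟩ := mem_shadow_iff_exists_mem_card_add_one.1 hB
      exact hBA.trans (hsub A hA)
    have hle : #(𝒜.bipartiteBelow (fun A B => B ⊆ A) B) ≤ #(G \ B) := by
      refine card_le_card_of_forall_subsingleton (fun A x => A = insert x B) ?_ ?_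
      · intro A hA
        rw [mem_bipartiteBelow _] at hA
        obtain ⟨hA𝒜, hBA⟩ := hA
        have hcards : #(A \ B) = 1 := by
          rw [card_sdiff_of_subset hBA, hsized A hA𝒜, hBcard]; omega
        obtain ⟨x, hx⟩ := card_eq_one.1 hcards
        have hxA : x ∈ A \ B := hx ▸ mem_singleton_self x
        rw [mem_sdiff] at hxA
        refine ⟨x, mem_sdiff.2 ⟨hsub A hA𝒜 hxA.1, hxA.2⟩, ?_⟩
        apply (eq_of_subset_of_card_le ?_ ?_).symm
        · intro y hy
          rcases mem_insert.1 hy with rfl | hy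
          · exact hxA.1
          · exact hBA hy
        · rw [card_insert_of_notMem hxA.2, hsized A hA𝒜, hBcard]; omega
      · intro x hx A hA A' hA'
        simp only [Set.mem_setOf_eq] at hA hA'
        rw [hA.2, hA'.2]
    calc #(𝒜.bipartiteBelow (fun A B => B ⊆ A) B) ≤ #(G \ B) := hle
    _ = #G - #B := card_sdiff_of_subset hBG
    _ = g := by omega

lemma colex_lt_of_top_mem {n : ℕ} {x : Fin n} (hx : ∀ y : Fin n, y ≤ x) {B C : Finset (Fin n)}
    (hB : x ∈ B) (hC : x ∉ C) : toColex C < toColex B := by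
  rw [toColex_lt_toColex]
  exact ⟨fun h => hC (h ▸ hB), fun a haC _ => ⟨x, hB, hC, hx a⟩⟩

lemma arith1 (j c d : ℕ) (h : c * (j + 3) ≤ d * (j + 2)) :
    (2 * j + 6) * c ≤ (2 * j + 5) * d := by nlinarith

lemma arith2 (j b b' t d : ℕ) (hbb' : b * (j + 3) = b' * (j + 2))
    (hhalf : 2 * (b + t) ≤ b' + b) (hd : b' ≤ d) :
    (2 * j + 6) * (b + t) ≤ (2 * j + 5) * d := by
  have h1 : b + 2 * t ≤ b' := by omega
  have h2 : (b + 2 * t) * (j + 3) ≤ b' * (j + 3) := Nat.mul_le_mul_right _ h1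
  have h3 : 2 * t * (j + 3) ≤ b' := by nlinarith
  nlinarith [Nat.mul_le_mul_left (2 * j + 5) hd]

/-- Kruskal–Katona expansion: a `(j+3)`-sized family of subsets of `Fin (2j+5)` occupying at
most half of its layer has shadow at least `(1+1/n)` times larger. -/
lemma expansionDown {n k : ℕ} (hn : n + 1 = 2 * k) (hk : 3 ≤ k)
    (T : Finset (Finset (Fin n))) (hT : ∀ A ∈ T, #A = k)
    (hhalf : 2 * #T ≤ n.choose k) : (n + 1) * #T ≤ n * #(∂ T) := by
  obtain ⟨j, rfl⟩ : ∃ j, k = j + 3 := ⟨k - 3, by omega⟩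
  obtain rfl : n = 2 * j + 5 := by omega
  have hTL : #T ≤ #(powersetCard (j + 3) (univ : Finset (Fin (2 * j + 5)))) := by
    apply card_le_card
    intro A hA
    rw [mem_powersetCard]
    exact ⟨subset_univ _, hT A hA⟩
  obtain ⟨𝒞, hinit, hcard⟩ := exists_initSeg_card hTL
  have hkk : #(∂ 𝒞) ≤ #(∂ T) :=
    kruskal_katona (fun A hA => hT A hA) (le_of_eq hcard) hinit
  suffices h : (2 * j + 5 + 1) * #𝒞 ≤ (2 * j + 5) * #(∂ 𝒞) by
    rw [hcard] at h
    calc (2 * j + 5 + 1) * #T ≤ (2 * j + 5) * #(∂ 𝒞) := h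
    _ ≤ (2 * j + 5) * #(∂ T) := Nat.mul_le_mul_left _ hkk
  set e : Fin (2 * j + 5) := ⟨2 * j + 4, by omega⟩ with he
  have hetop : ∀ y : Fin (2 * j + 5), y ≤ e := by
    intro y
    rw [Fin.le_def]
    have := y.2
    simp only [he]
    omega
  set G : Finset (Fin (2 * j + 5)) := univ.erase e with hGdef
  have hGcard : #G = 2 * j + 4 := by
    rw [hGdef, card_erase_of_mem (mem_univ _), card_univ, Fintype.card_fin]
    omega
  have h𝒞sized : ∀ A ∈ 𝒞, #A = j + 3 := fun A hA => hinit.1 hA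
  set 𝒞₀ : Finset (Finset (Fin (2 * j + 5))) := 𝒞.filter (fun A => e ∉ A) with h𝒞₀
  set 𝒞₁ : Finset (Finset (Fin (2 * j + 5))) := 𝒞.filter (fun A => e ∈ A) with h𝒞₁
  have h𝒞₀eq : 𝒞₀ = 𝒞 \ 𝒞₁ := by
    ext A
    rw [h𝒞₀, h𝒞₁, mem_sdiff, mem_filter, mem_filter]
    tauto
  have hsubset1 : 𝒞₁ ⊆ 𝒞 := by rw [h𝒞₁]; exact filter_subset _ _
  have hsplit : #𝒞₀ + #𝒞₁ = #𝒞 := by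
    rw [h𝒞₀eq, card_sdiff_of_subset hsubset1]
    have := card_le_card hsubset1
    omega
  by_cases h1 : 𝒞₁.Nonempty
  · -- 𝒞₀ is the full sublayer
    obtain ⟨B₁, hB₁⟩ := h1
    rw [h𝒞₁, mem_filter] at hB₁
    have h𝒞₀full : 𝒞₀ = powersetCard (j + 3) G := by
      ext C
      rw [h𝒞₀, mem_filter, mem_powersetCard]
      constructor
      · rintro ⟨hC𝒞, heC⟩
        refine ⟨fun x hx => ?_, h𝒞sized C hC𝒞⟩
        rw [hGdef, mem_erase]
        exact ⟨fun hxe => heC (hxe ▸ hx), mem_univ _⟩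
      · rintro ⟨hCG, hCk⟩
        have hCe : e ∉ C := fun hc => (mem_erase.1 (hCG hc)).1 rfl
        exact ⟨hinit.2 hB₁.1 ⟨colex_lt_of_top_mem hetop hB₁.2 hCe, hCk⟩, hCe⟩
    have hb : #𝒞₀ = (2 * j + 4).choose (j + 3) := by
      rw [h𝒞₀full, card_powersetCard, hGcard]
    have hshsub : powersetCard (j + 2) G ⊆ ∂ 𝒞 := by
      have h2 := shadow_powersetCard (k := j + 3) (by omega) G (by omega)
      have h3 : j + 3 - 1 = j + 2 := by omega
      rw [h3] at h2
      rw [← h2, ← h𝒞₀full]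
      exact shadow_mono (filter_subset _ _)
    have hd : (2 * j + 4).choose (j + 2) ≤ #(∂ 𝒞) := by
      calc (2 * j + 4).choose (j + 2) = #(powersetCard (j + 2) G) := by
            rw [card_powersetCard, hGcard]
      _ ≤ #(∂ 𝒞) := card_le_card hshsub
    have hpascal : (2 * j + 5).choose (j + 3) =
        (2 * j + 4).choose (j + 2) + (2 * j + 4).choose (j + 3) :=
      Nat.choose_succ_succ (2 * j + 4) (j + 2)
    have hbb' : (2 * j + 4).choose (j + 3) * (j + 3) =
        (2 * j + 4).choose (j + 2) * (j + 2) := by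
      have h5 := Nat.choose_succ_right_eq (2 * j + 4) (j + 2)
      have h4 : (2 * j + 4) - (j + 2) = j + 2 := by omega
      rw [h4] at h5
      exact h5
    have hm : #𝒞 = (2 * j + 4).choose (j + 3) + #𝒞₁ := by
      rw [← hb]; exact hsplit.symm
    have hhalf' : 2 * ((2 * j + 4).choose (j + 3) + #𝒞₁) ≤
        (2 * j + 4).choose (j + 2) + (2 * j + 4).choose (j + 3) := by
      rw [← hm, ← hpascal, hcard]
      exact hhalf
    rw [hm]
    exact arith2 j _ _ _ _ hbb' hhalf' hd
  · -- all of 𝒞 avoids e : use local LYM in the ground G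
    rw [not_nonempty_iff_eq_empty] at h1
    have h𝒞e : ∀ A ∈ 𝒞, A ⊆ G := by
      intro A hA
      have hAe : e ∉ A := by
        by_contra hc
        have : A ∈ 𝒞₁ := by rw [h𝒞₁, mem_filter]; exact ⟨hA, hc⟩
        simp [h1] at this
      intro x hx
      rw [hGdef, mem_erase]
      exact ⟨fun hxe => hAe (hxe ▸ hx), mem_univ _⟩
    have hlym := lym_ground G (j + 3) (j + 2) (by omega)
      (by rw [hGcard]; omega) 𝒞 h𝒞e h𝒞sized
    exact arith1 j _ _ hlym


lemma expansionUp {n k : ℕ} (hn : n + 1 = 2 * k) (hk : 3 ≤ k)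
    (T : Finset (Finset (Fin n))) (hT : ∀ A ∈ T, #A = k - 1)
    (hhalf : 2 * #T ≤ n.choose k) : (n + 1) * #T ≤ n * #(upNbrs n k T) := by
  have hc : ∀ A ∈ Tᶜˢ, #A = k := by
    intro A hA
    rw [mem_compls] at hA
    have h1 : #Aᶜ = k - 1 := hT _ hA
    have h2 : #Aᶜ = Fintype.card (Fin n) - #A := card_compl A
    have h3 := card_le_card (subset_univ A)
    rw [Fintype.card_fin] at h2
    rw [card_univ, Fintype.card_fin] at h3
    omega
  have hcc : #(Tᶜˢ) = #T := card_compls T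
  have h := expansionDown hn hk Tᶜˢ hc (by rw [hcc]; exact hhalf)
  rw [hcc] at h
  rwa [card_upNbrs_eq (by omega) T hT]

lemma expansionDownN {n k : ℕ} (hn : n + 1 = 2 * k) (hk : 3 ≤ k)
    (T : Finset (Finset (Fin n))) (hT : ∀ A ∈ T, #A = k)
    (hhalf : 2 * #T ≤ n.choose k) :
    (n + 1) * #T ≤ n * #(downNbrs n (k - 1) T) := by
  rw [downNbrs_eq_shadow (by omega) T hT]
  exact expansionDown hn hk T hT hhalf

lemma card_le_card_upNbrs {n k : ℕ} (hn : n + 1 = 2 * k) (hk : 3 ≤ k)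
    (T : Finset (Finset (Fin n))) (hT : ∀ A ∈ T, #A = k - 1) :
    (#T) ≤ #(upNbrs n k T) := by
  have hc : ∀ A ∈ Tᶜˢ, #A = k := by
    intro A hA
    rw [mem_compls] at hA
    have h1 : #Aᶜ = k - 1 := hT _ hA
    have h2 : #Aᶜ = Fintype.card (Fin n) - #A := card_compl A
    have h3 := card_le_card (subset_univ A)
    rw [Fintype.card_fin] at h2
    rw [card_univ, Fintype.card_fin] at h3
    omega
  have hlym := lym_ground (univ : Finset (Fin n)) k k (by omega)
    (by rw [card_univ, Fintype.card_fin]; omega) Tᶜˢ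
    (fun A _ => subset_univ A) hc
  have h4 := Nat.le_of_mul_le_mul_right hlym (show 0 < k by omega)
  rw [card_compls] at h4
  rwa [card_upNbrs_eq (by omega) T hT]


end Stmt14Aux

attribute [instance] instDecidableEqFin

open Stmt14Aux in

/-- For `n` odd, `k = (n+1)/2`, and every antichain `S ⊆ L_{k−2} ∪ L_{k−1} ∪ L_k ∪ L_{k+1}`:
either every 2-linked component `A` of `N⁺(S ∩ L_{k−2}) ∪ (S ∩ L_{k−1})` satisfies
`|N⁺(A)| ≥ (1 + 1/n)|A|`, or every 2-linked component `A` of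
`N⁻(S ∩ L_{k+1}) ∪ (S ∩ L_k)` satisfies `|N⁻(A)| ≥ (1 + 1/n)|A|`. -/
theorem stmt14 (n k : ℕ) (hn : Odd n) (hn5 : 5 ≤ n) (hk : k = (n + 1) / 2)
    (S : Finset (Finset (Fin n)))
    (hanti : ∀ u ∈ S, ∀ v ∈ S, u ≠ v → ¬ u ⊆ v)
    (hS : ∀ v ∈ S, v.card = k - 2 ∨ v.card = k - 1 ∨ v.card = k ∨ v.card = k + 1) :
    (∀ A : Finset (Finset (Fin n)),
        IsTwoLinkedComponent (compGraph n k)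
          (upNbrs n (k - 1) (S.filter (fun v => v.card = k - 2)) ∪
            S.filter (fun v => v.card = k - 1)) A →
        (1 + 1 / (n : ℝ)) * A.card ≤ ((upNbrs n k A).card : ℝ))
    ∨ (∀ A : Finset (Finset (Fin n)),
        IsTwoLinkedComponent (compGraph n k)
          (downNbrs n k (S.filter (fun v => v.card = k + 1)) ∪
            S.filter (fun v => v.card = k)) A →
        (1 + 1 / (n : ℝ)) * A.card ≤ ((downNbrs n (k - 1) A).card : ℝ)) := by
  classical
  have hn2 : n + 1 = 2 * k := by
    obtain ⟨m, rfl⟩ := hn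
    omega
  have hk3 : 3 ≤ k := by omega
  set Tp : Finset (Finset (Fin n)) :=
    upNbrs n (k - 1) (S.filter (fun v => v.card = k - 2)) ∪
      S.filter (fun v => v.card = k - 1) with hTp
  set Tm : Finset (Finset (Fin n)) :=
    downNbrs n k (S.filter (fun v => v.card = k + 1)) ∪
      S.filter (fun v => v.card = k) with hTm
  have hTpsized : ∀ A ∈ Tp, #A = k - 1 := by
    intro A hA
    rw [hTp, mem_union] at hA
    rcases hA with hA | hA
    · exact ((mem_filter.1 hA).2).1
    · exact (mem_filter.1 hA).2
  have hTmsized : ∀ A ∈ Tm, #A = k := by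
    intro A hA
    rw [hTm, mem_union] at hA
    rcases hA with hA | hA
    · exact ((mem_filter.1 hA).2).1
    · exact (mem_filter.1 hA).2
  -- the up-neighbourhood of Tp is disjoint from Tm
  have hdisj : Disjoint (upNbrs n k Tp) Tm := by
    rw [disjoint_left]
    intro x hxU hxT
    simp only [upNbrs, mem_filter, mem_univ, true_and] at hxU
    obtain ⟨hxk, v, hv, hvx⟩ := hxU
    -- produce u ∈ S with u ⊂ x
    have hleft : ∃ u ∈ S, u ⊂ x := by
      rw [hTp, mem_union] at hv
      rcases hv with hv | hv
      · simp only [upNbrs, mem_filter, mem_univ, true_and] at hv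
        obtain ⟨-, w, hw, hwv⟩ := hv
        exact ⟨w, hw.1, hwv.trans hvx⟩
      · exact ⟨v, (mem_filter.1 hv).1, hvx⟩
    -- produce u' ∈ S with x ⊆ u'
    have hright : ∃ u' ∈ S, x ⊆ u' := by
      rw [hTm, mem_union] at hxT
      rcases hxT with hxT | hxT
      · simp only [downNbrs, mem_filter, mem_univ, true_and] at hxT
        obtain ⟨-, z, hz, hxz⟩ := hxT
        exact ⟨z, hz.1, hxz.subset⟩
      · exact ⟨x, (mem_filter.1 hxT).1, subset_rfl⟩
    obtain ⟨u, huS, hux⟩ := hleft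
    obtain ⟨u', hu'S, hxu'⟩ := hright
    have huu' : u ⊆ u' := hux.subset.trans hxu'
    have hne : u ≠ u' := by
      rintro rfl
      exact (Finset.ssubset_of_ssubset_of_subset hux hxu').false
    exact hanti u huS u' hu'S hne huu'
  -- both live in the k-th layer
  have hcardsum : #(upNbrs n k Tp) + #Tm ≤ n.choose k := by
    have hsub : upNbrs n k Tp ∪ Tm ⊆ powersetCard k (univ : Finset (Fin n)) := by
      intro x hx
      rw [mem_powersetCard]
      refine ⟨subset_univ _, ?_⟩
      rcases mem_union.1 hx with hx | hx
      · exact ((mem_filter.1 hx).2).1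
      · exact hTmsized x hx
    calc #(upNbrs n k Tp) + #Tm = #(upNbrs n k Tp ∪ Tm) :=
          (card_union_of_disjoint hdisj).symm
    _ ≤ #(powersetCard k (univ : Finset (Fin n))) := card_le_card hsub
    _ = n.choose k := by rw [card_powersetCard, card_univ, Fintype.card_fin]
  -- Tp does not contract when going up
  have hTpU : #Tp ≤ #(upNbrs n k Tp) := card_le_card_upNbrs hn2 hk3 Tp hTpsized
  have hhalf : 2 * #Tp ≤ n.choose k ∨ 2 * #Tm ≤ n.choose k := by omega
  have hn0 : (0 : ℝ) < n := by
    have : (5:ℝ) ≤ n := by exact_mod_cast hn5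
    linarith
  rcases hhalf with hhalf | hhalf
  · left
    intro A hA
    have hAsub : A ⊆ Tp := hA.1
    have hAsized : ∀ B ∈ A, #B = k - 1 := fun B hB => hTpsized B (hAsub hB)
    have hAhalf : 2 * #A ≤ n.choose k := by
      have := card_le_card hAsub
      omega
    have hexp := expansionUp hn2 hk3 A hAsized hAhalf
    have hcast : ((n : ℝ) + 1) * (#A : ℝ) ≤ (n : ℝ) * (#(upNbrs n k A) : ℝ) := by
      exact_mod_cast hexp
    rw [show (1 + 1 / (n : ℝ)) = ((n : ℝ) + 1) / n by field_simp]
    rw [div_mul_eq_mul_div, div_le_iff₀ hn0]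
    nlinarith [hcast]
  · right
    intro A hA
    have hAsub : A ⊆ Tm := hA.1
    have hAsized : ∀ B ∈ A, #B = k := fun B hB => hTmsized B (hAsub hB)
    have hAhalf : 2 * #A ≤ n.choose k := by
      have := card_le_card hAsub
      omega
    have hexp := expansionDownN hn2 hk3 A hAsized hAhalf
    have hcast := (Nat.cast_le (α := ℝ)).2 hexp
    push_cast at hcast
    rw [show (1 + 1 / (n : ℝ)) = ((n : ℝ) + 1) / n by field_simp]
    rw [div_mul_eq_mul_div, div_le_iff₀ hn0]
    nlinarith [hcast]
end
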